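/- Let E be a finite-dimensional real normed vector space, U ⊆ E open, and ω a smooth closed 2-form on U. Let X, Y : U → E be smooth vector fields such that for every x ∈ U and every v ∈ E one has ω_x(X(x), v) = 0 and ω_x(Y(x), v) = 0. Then the Lie bracket [X, Y] also takes values in the kernel of ω: for every x ∈ U and v ∈ E, ω_x([X,Y](x), v) = 0. -/

import Mathlib

/-- The kernel of a smooth closed 2-form is involutive: if two smooth vector fields take
values in the kernel of `ω` at every point of `U`, then so does their Lie bracket
`[X,Y](x) = (DY)_x(X x) − (DX)_x(Y x)`. -/
theorem stmt1 {E : Type*} [NormedAddCommGroup E] [NormedSpace ℝ E] [FiniteDimensional ℝ E]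
    (U : Set E) (hU : IsOpen U)
    (ω : E → E →L[ℝ] E →L[ℝ] ℝ)
    (hω : ContDiffOn ℝ (⊤ : ℕ∞) ω U)
    (halt : ∀ x ∈ U, ∀ v, ω x v v = 0)
    (hclosed : ∀ x ∈ U, ∀ u v w,
      fderiv ℝ ω x u v w + fderiv ℝ ω x v w u + fderiv ℝ ω x w u v = 0)
    (X Y : E → E)
    (hX : ContDiffOn ℝ (⊤ : ℕ∞) X U) (hY : ContDiffOn ℝ (⊤ : ℕ∞) Y U)
    (hXk : ∀ x ∈ U, ∀ v, ω x (X x) v = 0)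
    (hYk : ∀ x ∈ U, ∀ v, ω x (Y x) v = 0) :
    ∀ x ∈ U, ∀ v, ω x (fderiv ℝ Y x (X x) - fderiv ℝ X x (Y x)) v = 0 := by
  intro x hx v
  have hωd : HasFDerivAt ω (fderiv ℝ ω x) x :=
    ((hω.contDiffAt (hU.mem_nhds hx)).differentiableAt (by simp)).hasFDerivAt
  -- pointwise antisymmetry of ω on U
  have hanti : ∀ y ∈ U, ∀ a b, ω y a b = - ω y b a := by
    intro y hy a b
    have h := halt y hy (a + b)
    simp [map_add, ContinuousLinearMap.add_apply, halt y hy a, halt y hy b] at h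
    linarith
  -- antisymmetry of the derivative of ω at x
  have hdanti : ∀ u a b, fderiv ℝ ω x u a b = - fderiv ℝ ω x u b a := by
    have hsq : ∀ c u, fderiv ℝ ω x u c c = 0 := by
      intro c u
      have hc1 : HasFDerivAt (fun y => ω y c) ((fderiv ℝ ω x).flip c) x := by
        have := hωd.clm_apply (hasFDerivAt_const c x)
        convert this using 1
        ext u; simp
        simp
      have hc2 : HasFDerivAt (fun y => ω y c c)
          (((fderiv ℝ ω x).flip c).flip c) x := by
        have := hc1.clm_apply (hasFDerivAt_const c x)
        convert this using 1
        ext u; simp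
        simp
      have hz : HasFDerivAt (fun y => ω y c c) (0 : E →L[ℝ] ℝ) x := by
        apply (hasFDerivAt_const (0 : ℝ) x).congr_of_eventuallyEq
        filter_upwards [hU.mem_nhds hx] with y hy
        exact halt y hy c
      have := hc2.unique hz
      have := congrArg (fun (f : E →L[ℝ] ℝ) => f u) this
      simpa using this
    intro u a b
    have h := hsq (a + b) u
    simp [map_add, ContinuousLinearMap.add_apply, hsq a u, hsq b u] at h
    linarith
  -- key: differentiating ω y (Z y) w = 0
  have key : ∀ (Z : E → E), ContDiffOn ℝ (⊤ : ℕ∞) Z U →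
      (∀ y ∈ U, ∀ w, ω y (Z y) w = 0) →
      ∀ u w, fderiv ℝ ω x u (Z x) w + ω x (fderiv ℝ Z x u) w = 0 := by
    intro Z hZ hZk u w
    have hZd : HasFDerivAt Z (fderiv ℝ Z x) x :=
      ((hZ.contDiffAt (hU.mem_nhds hx)).differentiableAt (by simp)).hasFDerivAt
    have h1 : HasFDerivAt (fun y => ω y (Z y))
        ((ω x).comp (fderiv ℝ Z x) + (fderiv ℝ ω x).flip (Z x)) x :=
      hωd.clm_apply hZd
    have hz : HasFDerivAt (fun y => ω y (Z y)) (0 : E →L[ℝ] E →L[ℝ] ℝ) x := by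
      apply (hasFDerivAt_const (0 : E →L[ℝ] ℝ) x).congr_of_eventuallyEq
      filter_upwards [hU.mem_nhds hx] with y hy
      ext w
      exact hZk y hy w
    have h2 := h1.unique hz
    have := congrArg (fun (f : E →L[ℝ] E →L[ℝ] ℝ) => f u w) h2
    simp at this
    linarith
  set a := X x
  set b := Y x
  have k1 : ω x (fderiv ℝ Y x a) v = - fderiv ℝ ω x a b v := by
    have := key Y hY hYk a v; linarith
  have k2 : ω x (fderiv ℝ X x b) v = - fderiv ℝ ω x b a v := by
    have := key X hX hXk b v; linarith
  have k3 : fderiv ℝ ω x v a b = 0 := by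
    have h := key X hX hXk v b
    have : ω x (fderiv ℝ X x v) b = - ω x b (fderiv ℝ X x v) :=
      hanti x hx _ _
    rw [this, hYk x hx] at h
    linarith
  have hcl := hclosed x hx a b v
  have h4 : fderiv ℝ ω x b v a = - fderiv ℝ ω x b a v := hdanti b v a
  have hgoal : ω x (fderiv ℝ Y x a - fderiv ℝ X x b) v
      = ω x (fderiv ℝ Y x a) v - ω x (fderiv ℝ X x b) v := by
    rw [map_sub]; simp
  rw [hgoal, k1, k2]
  linarith
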